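/- Uniqueness for the degenerate periodic problem with a coercivity window (Theorem 2.6): let ε > 0, i ∈ {0,1}, G_thr > 0, and 0 ≤ θ_α < θ_ω ≤ 1, let C_F be a Friedrichs constant for Ω, let A : ℝ×ℝ² → ℝ and C : ℝ×ℝ² → ℝ² be C¹ on an open set containing ℝ×closure(Ω) and 1-periodic in θ, with A ≥ 0 everywhere and A(θ,x) ≥ G_thr whenever θ ∈ [θ_α,θ_ω], and let g : ℝ² → ℝ be continuous. If S₁ and S₂ are both C¹ in θ, C² in x on an open set containing ℝ×closure(Ω), 1-periodic in θ, and satisfy ∂S/∂θ − (1/εⁱ)∇·(A(θ,·)∇S(θ,·)) = (1/εⁱ)∇·C(θ,·) pointwise in Ω and ∂S/∂n + S = g pointwise on ∂Ω for every θ, then S₁ = S₂ on ℝ×closure(Ω). -/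

import Mathlib

open MeasureTheory Set Real
open scoped RealInnerProductSpace

noncomputable section

abbrev E2 : Type := EuclideanSpace ℝ (Fin 2)

/-- Divergence of a vector field on the plane. -/
def vdiv (F : E2 → E2) (x : E2) : ℝ := ∑ i, fderiv ℝ F x (EuclideanSpace.single i 1) i

/-- A nonempty bounded open set in the plane with `C¹` boundary described by a defining
function `Φ`. -/
structure C1Domain where
  Ω : Set E2
  Φ : E2 → ℝ
  nonempty : Ω.Nonempty
  bounded : Bornology.IsBounded Ω
  isOpen : IsOpen Ω
  smoothΦ : ContDiff ℝ 1 Φ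
  eq_dom : Ω = {x | Φ x < 0}
  eq_bd : frontier Ω = {x | Φ x = 0}
  grad_ne : ∀ x ∈ frontier Ω, gradient Φ x ≠ 0

/-- Outward unit normal. -/
def nml (D : C1Domain) (x : E2) : E2 := ‖gradient D.Φ x‖⁻¹ • gradient D.Φ x

/-- The divergence theorem holds on the domain. -/
def DivergenceThm (D : C1Domain) : Prop :=
  ∀ F : E2 → E2, (∃ U : Set E2, IsOpen U ∧ closure D.Ω ⊆ U ∧ ContDiffOn ℝ 1 F U) →
    (∫ x in D.Ω, vdiv F x) = ∫ x in frontier D.Ω, ⟪F x, nml D x⟫ ∂μH[1]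

/-- `CF` is a Friedrichs constant for the domain. -/
def IsFriedrichs (D : C1Domain) (CF : ℝ) : Prop :=
  0 < CF ∧ ∀ u : E2 → ℝ, (∃ U : Set E2, IsOpen U ∧ closure D.Ω ⊆ U ∧ ContDiffOn ℝ 1 u U) →
    (∫ x in D.Ω, (u x) ^ 2) ≤
      CF * ((∫ x in D.Ω, ‖gradient u x‖ ^ 2) + ∫ x in frontier D.Ω, (u x) ^ 2 ∂μH[1])

/-- `S(θ,x)` is `C¹` in `θ` and `C²` in `x` on an open set containing `ℝ × closure Ω`,
and is `1`-periodic in `θ`. -/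
def PeriodicReg (D : C1Domain) (S : ℝ → E2 → ℝ) : Prop :=
  (∃ U : Set (ℝ × E2), IsOpen U ∧ ((univ : Set ℝ) ×ˢ closure D.Ω) ⊆ U ∧
    ContDiffOn ℝ 1 (fun p : ℝ × E2 => S p.1 p.2) U ∧
    ∀ θ : ℝ, ContDiffOn ℝ 2 (fun x => S θ x) {x | (θ, x) ∈ U}) ∧
  ∀ θ x, S (θ + 1) x = S θ x

/-! ### Auxiliary lemmas -/

lemma inner_gradient_eq (u : E2 → ℝ) (x v : E2) : ⟪gradient u x, v⟫ = fderiv ℝ u x v := by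
  rw [gradient]
  exact InnerProductSpace.toDual_symm_apply (𝕜 := ℝ) (E := E2)

lemma gradient_apply (u : E2 → ℝ) (x : E2) (i : Fin 2) :
    gradient u x i = fderiv ℝ u x (EuclideanSpace.single i 1) := by
  have := inner_gradient_eq u x (EuclideanSpace.single i 1)
  rw [EuclideanSpace.inner_single_right] at this
  simpa using this

lemma grad_contDiffOn {U : Set E2} (hU : IsOpen U) {u : E2 → ℝ} (hu : ContDiffOn ℝ 2 u U) :
    ContDiffOn ℝ 1 (fun x => gradient u x) U := by
  have h1 : ContDiffOn ℝ 1 (fderiv ℝ u) U := hu.fderiv_of_isOpen hU (by norm_num)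
  have : ContDiff ℝ 1 (fun L : StrongDual ℝ E2 => (InnerProductSpace.toDual ℝ E2).symm L) :=
    (InnerProductSpace.toDual ℝ E2).symm.contDiff
  exact this.comp_contDiffOn h1

lemma vdiv_continuousOn {U : Set E2} (hU : IsOpen U) {F : E2 → E2}
    (hF : ContDiffOn ℝ 1 F U) : ContinuousOn (vdiv F) U := by
  have h1 : ContinuousOn (fderiv ℝ F) U := hF.continuousOn_fderiv_of_isOpen hU le_rfl
  apply continuousOn_finset_sum
  intro i _
  exact (EuclideanSpace.proj (𝕜 := ℝ) i).continuous.comp_continuousOn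
    ((ContinuousLinearMap.apply ℝ E2 (EuclideanSpace.single i 1)).continuous.comp_continuousOn h1)

lemma vdiv_smul {u : E2 → ℝ} {G : E2 → E2} {x : E2} (hu : DifferentiableAt ℝ u x)
    (hG : DifferentiableAt ℝ G x) :
    vdiv (fun y => u y • G y) x = ⟪gradient u x, G x⟫ + u x * vdiv G x := by
  unfold vdiv
  rw [fderiv_fun_smul hu hG]
  have hinner : ⟪gradient u x, G x⟫ = ∑ i, fderiv ℝ u x (EuclideanSpace.single i 1) * G x i := by
    rw [PiLp.inner_apply]
    congr 1; ext i
    rw [RCLike.inner_apply, starRingEnd_apply, star_trivial, gradient_apply, mul_comm]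
  rw [hinner, Finset.mul_sum, ← Finset.sum_add_distrib]
  congr 1; ext i
  simp [ContinuousLinearMap.smulRight_apply, PiLp.add_apply, PiLp.smul_apply, smul_eq_mul]
  ring

lemma vdiv_sub {F G : E2 → E2} {x : E2} (hF : DifferentiableAt ℝ F x)
    (hG : DifferentiableAt ℝ G x) :
    vdiv (fun y => F y - G y) x = vdiv F x - vdiv G x := by
  unfold vdiv
  rw [fderiv_fun_sub hF hG, ← Finset.sum_sub_distrib]
  exact Finset.sum_congr rfl fun i _ => by simp

lemma gradient_sub' {f g : E2 → ℝ} {x : E2} (hf : DifferentiableAt ℝ f x)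
    (hg : DifferentiableAt ℝ g x) :
    gradient (fun y => f y - g y) x = gradient f x - gradient g x := by
  rw [gradient, gradient, gradient, fderiv_fun_sub hf hg, map_sub]

lemma vdiv_congr_nhds {F G : E2 → E2} {x : E2} (h : F =ᶠ[nhds x] G) : vdiv F x = vdiv G x := by
  unfold vdiv
  rw [h.fderiv_eq]

lemma const_of_antitone_periodic {f : ℝ → ℝ} (ha : Antitone f) (hp : ∀ t, f (t + 1) = f t) :
    ∀ a b, f a = f b := by
  have key : ∀ (a : ℝ) (n : ℕ), f (a + n) = f a := by
    intro a n
    induction n with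
    | zero => simp
    | succ k ih => rw [Nat.cast_succ, ← add_assoc, hp, ih]
  have h2 : ∀ a b : ℝ, a ≤ b → f a = f b := by
    intro a b hab
    obtain ⟨n, hn⟩ := exists_nat_ge (b - a)
    refine le_antisymm ?_ (ha hab)
    calc f a = f (a + n) := (key a n).symm
    _ ≤ f b := ha (by linarith)
  intro a b
  rcases le_total a b with h | h
  · exact h2 a b h
  · exact (h2 b a h).symm

lemma zero_on_open_of_integral_zero {f : E2 → ℝ} {Ω : Set E2} (hΩ : IsOpen Ω)
    (hc : ContinuousOn f Ω) (hi : IntegrableOn (fun x => f x ^ 2) Ω)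
    (h0 : (∫ x in Ω, f x ^ 2) = 0) : ∀ x ∈ Ω, f x = 0 := by
  have hae : (fun x => f x ^ 2) =ᶠ[ae (volume.restrict Ω)] 0 :=
    (integral_eq_zero_iff_of_nonneg_ae (.of_forall fun x => sq_nonneg _) hi).1 h0
  have hnull : volume.restrict Ω {x | f x ^ 2 ≠ 0} = 0 := by
    simpa [Filter.EventuallyEq, ae_iff] using hae
  intro x hx
  by_contra hne
  have hca : ContinuousAt f x := hc.continuousAt (hΩ.mem_nhds hx)
  have hev : {y | y ∈ Ω ∧ f y ≠ 0} ∈ nhds x := by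
    filter_upwards [hΩ.mem_nhds hx, hca.eventually_ne hne] with y h1 h2
    exact ⟨h1, h2⟩
  obtain ⟨O, hOsub, hOopen, hxO⟩ := mem_nhds_iff.1 hev
  have hOpos : 0 < volume O := hOopen.measure_pos volume ⟨x, hxO⟩
  have hOsub' : O ⊆ {y | f y ^ 2 ≠ 0} ∩ Ω := fun y hy =>
    ⟨pow_ne_zero 2 (hOsub hy).2, (hOsub hy).1⟩
  have : volume O ≤ 0 := by
    calc volume O ≤ volume ({y | f y ^ 2 ≠ 0} ∩ Ω) := measure_mono hOsub'
    _ = volume.restrict Ω {y | f y ^ 2 ≠ 0} := (Measure.restrict_apply' hΩ.measurableSet).symm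
    _ = 0 := hnull
  exact absurd (le_antisymm this zero_le) (ne_of_gt hOpos)

/-- uniqueness for the degenerate periodic Robin problem with a coercivity
window (Theorem 2.6). -/
theorem stmt10
    (D : C1Domain) (hdiv : DivergenceThm D)
    (ε : ℝ) (hε : 0 < ε) (i : ℕ) (hi : i = 0 ∨ i = 1)
    (Gthr θα θω : ℝ) (hGthr : 0 < Gthr) (hθα : 0 ≤ θα) (hαω : θα < θω) (hθω : θω ≤ 1)
    (CF : ℝ) (hCF : IsFriedrichs D CF)
    (A : ℝ → E2 → ℝ) (C : ℝ → E2 → E2)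
    (UA : Set (ℝ × E2)) (hUAopen : IsOpen UA)
    (hUAsub : (univ : Set ℝ) ×ˢ closure D.Ω ⊆ UA)
    (hA : ContDiffOn ℝ 1 (fun p : ℝ × E2 => A p.1 p.2) UA)
    (hC : ContDiffOn ℝ 1 (fun p : ℝ × E2 => C p.1 p.2) UA)
    (hAper : ∀ θ x, A (θ + 1) x = A θ x)
    (hCper : ∀ θ x, C (θ + 1) x = C θ x)
    (hApos : ∀ θ x, 0 ≤ A θ x)
    (hAwin : ∀ θ ∈ Icc θα θω, ∀ x, Gthr ≤ A θ x)
    (g : E2 → ℝ) (hg : Continuous g)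
    (S₁ S₂ : ℝ → E2 → ℝ)
    (hreg1 : PeriodicReg D S₁) (hreg2 : PeriodicReg D S₂)
    (hpde1 : ∀ θ : ℝ, ∀ x ∈ D.Ω,
      deriv (fun s => S₁ s x) θ
          - (1 / ε ^ i) * vdiv (fun y => A θ y • gradient (S₁ θ) y) x
        = (1 / ε ^ i) * vdiv (C θ) x)
    (hpde2 : ∀ θ : ℝ, ∀ x ∈ D.Ω,
      deriv (fun s => S₂ s x) θ
          - (1 / ε ^ i) * vdiv (fun y => A θ y • gradient (S₂ θ) y) x
        = (1 / ε ^ i) * vdiv (C θ) x)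
    (hbc1 : ∀ θ : ℝ, ∀ x ∈ frontier D.Ω,
      ⟪gradient (S₁ θ) x, nml D x⟫ + S₁ θ x = g x)
    (hbc2 : ∀ θ : ℝ, ∀ x ∈ frontier D.Ω,
      ⟪gradient (S₂ θ) x, nml D x⟫ + S₂ θ x = g x) :
    ∀ θ : ℝ, ∀ x ∈ closure D.Ω, S₁ θ x = S₂ θ x := by
  obtain ⟨⟨U₁, hU₁o, hU₁s, hS₁j, hS₁x⟩, hper₁⟩ := hreg1
  obtain ⟨⟨U₂, hU₂o, hU₂s, hS₂j, hS₂x⟩, hper₂⟩ := hreg2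
  set c : ℝ := 1 / ε ^ i with hc_def
  have hc : 0 < c := by positivity
  set w : ℝ → E2 → ℝ := fun θ x => S₁ θ x - S₂ θ x with hw_def
  set U : Set (ℝ × E2) := U₁ ∩ U₂ ∩ UA with hU_def
  have hUo : IsOpen U := (hU₁o.inter hU₂o).inter hUAopen
  have hUs : ∀ (θ : ℝ), ∀ x ∈ closure D.Ω, (θ, x) ∈ U := fun θ x hx =>
    ⟨⟨hU₁s (mem_prod.2 ⟨mem_univ _, hx⟩), hU₂s (mem_prod.2 ⟨mem_univ _, hx⟩)⟩,
      hUAsub (mem_prod.2 ⟨mem_univ _, hx⟩)⟩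
  have hK : IsCompact (closure D.Ω) := D.bounded.isCompact_closure
  have hΩm : MeasurableSet D.Ω := D.isOpen.measurableSet
  have hFrm : MeasurableSet (frontier D.Ω) := isClosed_frontier.measurableSet
  have hΩsub : D.Ω ⊆ closure D.Ω := subset_closure
  have hFrsub : frontier D.Ω ⊆ closure D.Ω := frontier_subset_closure
  set V : ℝ → Set E2 := fun θ => {x | (θ, x) ∈ U} with hV_def
  have hVo : ∀ θ, IsOpen (V θ) := fun θ => hUo.preimage (Continuous.prodMk_right θ)
  have hVs : ∀ θ, closure D.Ω ⊆ V θ := fun θ x hx => hUs θ x hx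
  have hV1 : ∀ θ, V θ ⊆ {x | (θ, x) ∈ U₁} := fun θ x hx => hx.1.1
  have hV2 : ∀ θ, V θ ⊆ {x | (θ, x) ∈ U₂} := fun θ x hx => hx.1.2
  -- regularity of w
  have hwj : ContDiffOn ℝ 1 (fun p : ℝ × E2 => w p.1 p.2) U :=
    (hS₁j.mono fun p hp => hp.1.1).sub (hS₂j.mono fun p hp => hp.1.2)
  have hwx : ∀ θ, ContDiffOn ℝ 2 (w θ) (V θ) := fun θ =>
    ((hS₁x θ).mono (hV1 θ)).sub ((hS₂x θ).mono (hV2 θ))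
  have hS₁x' : ∀ θ, ContDiffOn ℝ 2 (S₁ θ) (V θ) := fun θ => (hS₁x θ).mono (hV1 θ)
  have hS₂x' : ∀ θ, ContDiffOn ℝ 2 (S₂ θ) (V θ) := fun θ => (hS₂x θ).mono (hV2 θ)
  have hAx : ∀ θ, ContDiffOn ℝ 1 (A θ) (V θ) := by
    intro θ
    have := hA.comp ((contDiff_const.prodMk contDiff_id).contDiffOn (s := V θ))
      (fun x hx => hx.2)
    exact this
  -- differentiability at points of V θ
  have hdW : ∀ θ, ∀ y ∈ V θ, DifferentiableAt ℝ (w θ) y := fun θ y hy =>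
    (((hwx θ).of_le one_le_two).differentiableOn one_ne_zero).differentiableAt
      ((hVo θ).mem_nhds hy)
  have hdS₁ : ∀ θ, ∀ y ∈ V θ, DifferentiableAt ℝ (S₁ θ) y := fun θ y hy =>
    (((hS₁x' θ).of_le one_le_two).differentiableOn one_ne_zero).differentiableAt
      ((hVo θ).mem_nhds hy)
  have hdS₂ : ∀ θ, ∀ y ∈ V θ, DifferentiableAt ℝ (S₂ θ) y := fun θ y hy =>
    (((hS₂x' θ).of_le one_le_two).differentiableOn one_ne_zero).differentiableAt
      ((hVo θ).mem_nhds hy)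
  have hdA : ∀ θ, ∀ y ∈ V θ, DifferentiableAt ℝ (A θ) y := fun θ y hy =>
    ((hAx θ).differentiableOn one_ne_zero).differentiableAt ((hVo θ).mem_nhds hy)
  -- C¹ fields
  have hgw : ∀ θ, ContDiffOn ℝ 1 (fun x => gradient (w θ) x) (V θ) := fun θ =>
    grad_contDiffOn (hVo θ) (hwx θ)
  have hgS₁ : ∀ θ, ContDiffOn ℝ 1 (fun x => gradient (S₁ θ) x) (V θ) := fun θ =>
    grad_contDiffOn (hVo θ) (hS₁x' θ)
  have hgS₂ : ∀ θ, ContDiffOn ℝ 1 (fun x => gradient (S₂ θ) x) (V θ) := fun θ =>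
    grad_contDiffOn (hVo θ) (hS₂x' θ)
  have hFld : ∀ θ, ContDiffOn ℝ 1 (fun y => A θ y • gradient (w θ) y) (V θ) := fun θ =>
    (hAx θ).smul (hgw θ)
  have hFld1 : ∀ θ, ContDiffOn ℝ 1 (fun y => A θ y • gradient (S₁ θ) y) (V θ) := fun θ =>
    (hAx θ).smul (hgS₁ θ)
  have hFld2 : ∀ θ, ContDiffOn ℝ 1 (fun y => A θ y • gradient (S₂ θ) y) (V θ) := fun θ =>
    (hAx θ).smul (hgS₂ θ)
  have hdFld : ∀ θ, ∀ y ∈ V θ, DifferentiableAt ℝ (fun y => A θ y • gradient (w θ) y) y :=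
    fun θ y hy => ((hFld θ).differentiableOn one_ne_zero).differentiableAt ((hVo θ).mem_nhds hy)
  have hdFld1 : ∀ θ, ∀ y ∈ V θ, DifferentiableAt ℝ (fun y => A θ y • gradient (S₁ θ) y) y :=
    fun θ y hy => ((hFld1 θ).differentiableOn one_ne_zero).differentiableAt ((hVo θ).mem_nhds hy)
  have hdFld2 : ∀ θ, ∀ y ∈ V θ, DifferentiableAt ℝ (fun y => A θ y • gradient (S₂ θ) y) y :=
    fun θ y hy => ((hFld2 θ).differentiableOn one_ne_zero).differentiableAt ((hVo θ).mem_nhds hy)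
  -- gradient of w is the difference of gradients, on V θ
  have hgradw : ∀ θ, ∀ y ∈ V θ, gradient (w θ) y = gradient (S₁ θ) y - gradient (S₂ θ) y :=
    fun θ y hy => gradient_sub' (hdS₁ θ y hy) (hdS₂ θ y hy)
  -- θ-derivative of w
  set w' : ℝ → E2 → ℝ := fun θ x => fderiv ℝ (fun p : ℝ × E2 => w p.1 p.2) (θ, x) (1, 0)
    with hw'_def
  have hw'at : ∀ (θ : ℝ), ∀ x ∈ closure D.Ω, HasDerivAt (fun t => w t x) (w' θ x) θ := by
    intro θ x hx
    have hdiff : DifferentiableAt ℝ (fun p : ℝ × E2 => w p.1 p.2) (θ, x) :=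
      (hwj.differentiableOn one_ne_zero).differentiableAt (hUo.mem_nhds (hUs θ x hx))
    have h1 : HasDerivAt (fun t : ℝ => (t, x)) ((1 : ℝ), (0 : E2)) θ :=
      (hasDerivAt_id θ).prodMk (hasDerivAt_const θ x)
    exact hdiff.hasFDerivAt.comp_hasDerivAt θ h1
  have hw'c : ContinuousOn (fun p : ℝ × E2 => w' p.1 p.2) U := by
    have h1 : ContinuousOn (fderiv ℝ (fun p : ℝ × E2 => w p.1 p.2)) U :=
      hwj.continuousOn_fderiv_of_isOpen hUo le_rfl
    exact (ContinuousLinearMap.apply ℝ ℝ ((1 : ℝ), (0 : E2))).continuous.comp_continuousOn h1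
  -- energy and its derivative
  set Eng : ℝ → ℝ := fun θ => ∫ x in D.Ω, (w θ x) ^ 2 with hEng_def
  have hwcK : ∀ θ, ContinuousOn (w θ) (closure D.Ω) := fun θ =>
    ((hwx θ).continuousOn).mono (hVs θ)
  have hμΩ : volume D.Ω < ⊤ := lt_of_le_of_lt (measure_mono hΩsub) hK.measure_lt_top
  have hEd : ∀ θ, HasDerivAt Eng (∫ x in D.Ω, 2 * w θ x * w' θ x) θ := by
    intro θ₀
    have hKc : IsCompact ((Icc (θ₀ - 1) (θ₀ + 1)) ×ˢ closure D.Ω) := isCompact_Icc.prod hK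
    have hcont : ContinuousOn (fun p : ℝ × E2 => 2 * w p.1 p.2 * w' p.1 p.2) U :=
      (continuousOn_const.mul hwj.continuousOn).mul hw'c
    obtain ⟨M, hM⟩ := hKc.exists_bound_of_continuousOn
      (hcont.mono fun p hp => hUs p.1 p.2 hp.2)
    have hmain := hasDerivAt_integral_of_dominated_loc_of_deriv_le
      (μ := volume.restrict D.Ω) (F := fun t x => (w t x) ^ 2)
      (F' := fun t x => 2 * w t x * w' t x) (bound := fun _ => M) (x₀ := θ₀)
      (s := Metric.ball θ₀ 1) (Metric.ball_mem_nhds θ₀ one_pos)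
      (Filter.Eventually.of_forall fun t =>
        (((hwcK t).pow 2).mono hΩsub).aestronglyMeasurable hΩm)
      (by exact (((hwcK θ₀).pow 2).integrableOn_compact hK).mono_set hΩsub)
      ?_ ?_ ?_ ?_
    · exact hmain.2
    · -- measurability of F' θ₀
      have hsl : ContinuousOn (fun x => 2 * w θ₀ x * w' θ₀ x) (V θ₀) := by
        have := hcont.comp (Continuous.prodMk_right θ₀).continuousOn
          (fun x (hx : x ∈ V θ₀) => hx)
        exact this
      exact ((hsl.mono (fun x hx => hVs θ₀ (hΩsub hx))).aestronglyMeasurable hΩm)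
    · -- bound
      refine (ae_restrict_iff' hΩm).2 (Filter.Eventually.of_forall fun x hx => ?_)
      intro t ht
      have ht' : t ∈ Icc (θ₀ - 1) (θ₀ + 1) := by
        rw [Metric.mem_ball, Real.dist_eq, abs_lt] at ht
        constructor <;> linarith [ht.1, ht.2]
      exact hM (t, x) ⟨ht', hΩsub hx⟩
    · -- integrability of bound
      refine integrable_const_iff.2 (Or.inr ?_)
      constructor
      rw [Measure.restrict_apply_univ]
      exact hμΩ
    · -- differentiability
      refine (ae_restrict_iff' hΩm).2 (Filter.Eventually.of_forall fun x hx => ?_)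
      intro t ht
      have h := (hw'at t x (hΩsub hx)).fun_pow 2
      simpa [mul_comm, mul_assoc, mul_left_comm] using h
  -- dissipation functionals
  set I1 : ℝ → ℝ := fun θ => ∫ x in D.Ω, A θ x * ‖gradient (w θ) x‖ ^ 2 with hI1_def
  set I2 : ℝ → ℝ := fun θ => ∫ x in frontier D.Ω, A θ x * (w θ x) ^ 2 ∂μH[1] with hI2_def
  -- continuity facts on the compact set
  have hAcK : ∀ θ, ContinuousOn (A θ) (closure D.Ω) := fun θ =>
    (hAx θ).continuousOn.mono (hVs θ)
  have hgwcK : ∀ θ, ContinuousOn (fun x => gradient (w θ) x) (closure D.Ω) := fun θ =>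
    (hgw θ).continuousOn.mono (hVs θ)
  have hdivcK : ∀ θ, ContinuousOn (vdiv (fun y => A θ y • gradient (w θ) y)) (closure D.Ω) :=
    fun θ => (vdiv_continuousOn (hVo θ) (hFld θ)).mono (hVs θ)
  -- pointwise PDE for w
  have hpdew : ∀ (θ : ℝ), ∀ x ∈ D.Ω,
      w' θ x = c * vdiv (fun y => A θ y • gradient (w θ) y) x := by
    intro θ x hx
    have hxV : x ∈ V θ := hVs θ (hΩsub hx)
    -- derivatives of S₁ and S₂ in θ
    have hd1 : HasDerivAt (fun t => S₁ t x)
        (fderiv ℝ (fun p : ℝ × E2 => S₁ p.1 p.2) (θ, x) (1, 0)) θ := by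
      have hdiff : DifferentiableAt ℝ (fun p : ℝ × E2 => S₁ p.1 p.2) (θ, x) :=
        (hS₁j.differentiableOn one_ne_zero).differentiableAt
          (hU₁o.mem_nhds (hUs θ x (hΩsub hx)).1.1)
      exact hdiff.hasFDerivAt.comp_hasDerivAt θ
        ((hasDerivAt_id θ).prodMk (hasDerivAt_const θ x))
    have hd2 : HasDerivAt (fun t => S₂ t x)
        (fderiv ℝ (fun p : ℝ × E2 => S₂ p.1 p.2) (θ, x) (1, 0)) θ := by
      have hdiff : DifferentiableAt ℝ (fun p : ℝ × E2 => S₂ p.1 p.2) (θ, x) :=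
        (hS₂j.differentiableOn one_ne_zero).differentiableAt
          (hU₂o.mem_nhds (hUs θ x (hΩsub hx)).1.2)
      exact hdiff.hasFDerivAt.comp_hasDerivAt θ
        ((hasDerivAt_id θ).prodMk (hasDerivAt_const θ x))
    have hsub : HasDerivAt (fun t => w t x)
        (deriv (fun s => S₁ s x) θ - deriv (fun s => S₂ s x) θ) θ := by
      have := (hd1.sub hd2)
      rwa [hd1.deriv, hd2.deriv]
    have hw'eq : w' θ x = deriv (fun s => S₁ s x) θ - deriv (fun s => S₂ s x) θ :=
      (hw'at θ x (hΩsub hx)).unique hsub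
    have hp1 : deriv (fun s => S₁ s x) θ =
        c * vdiv (fun y => A θ y • gradient (S₁ θ) y) x + c * vdiv (C θ) x := by
      have := hpde1 θ x hx; linarith
    have hp2 : deriv (fun s => S₂ s x) θ =
        c * vdiv (fun y => A θ y • gradient (S₂ θ) y) x + c * vdiv (C θ) x := by
      have := hpde2 θ x hx; linarith
    have hvd : vdiv (fun y => A θ y • gradient (S₁ θ) y) x
        - vdiv (fun y => A θ y • gradient (S₂ θ) y) x
        = vdiv (fun y => A θ y • gradient (w θ) y) x := by
      rw [← vdiv_sub (hdFld1 θ x hxV) (hdFld2 θ x hxV)]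
      apply vdiv_congr_nhds
      filter_upwards [(hVo θ).mem_nhds hxV] with y hy
      rw [hgradw θ y hy, smul_sub]
    rw [hw'eq, hp1, hp2]
    ring_nf
    rw [← hvd]
    ring
  -- boundary condition for w
  have hbcw : ∀ (θ : ℝ), ∀ x ∈ frontier D.Ω, ⟪gradient (w θ) x, nml D x⟫ = - w θ x := by
    intro θ x hx
    rw [hgradw θ x (hVs θ (hFrsub hx)), inner_sub_left]
    have h1 := hbc1 θ x hx
    have h2 := hbc2 θ x hx
    simp only [hw_def]
    linarith
  -- value of the energy derivative
  have hval : ∀ θ, (∫ x in D.Ω, 2 * w θ x * w' θ x) = -(2 * c) * (I1 θ + I2 θ) := by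
    intro θ
    have hdivF := hdiv (fun y => w θ y • (A θ y • gradient (w θ) y))
      ⟨V θ, hVo θ, hVs θ, (((hwx θ).of_le one_le_two).smul (hFld θ))⟩
    -- rewrite the interior integral
    have hIa : IntegrableOn (fun x => A θ x * ‖gradient (w θ) x‖ ^ 2) D.Ω := by
      exact ((((hAcK θ).mul (((hgwcK θ).norm).pow 2))).integrableOn_compact hK).mono_set hΩsub
    have hIb : IntegrableOn
        (fun x => w θ x * vdiv (fun y => A θ y • gradient (w θ) y) x) D.Ω := by
      exact (((hwcK θ).mul (hdivcK θ)).integrableOn_compact hK).mono_set hΩsub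
    have hLHS : (∫ x in D.Ω, vdiv (fun y => w θ y • (A θ y • gradient (w θ) y)) x)
        = I1 θ + ∫ x in D.Ω, w θ x * vdiv (fun y => A θ y • gradient (w θ) y) x := by
      rw [setIntegral_congr_fun hΩm (g := fun x => A θ x * ‖gradient (w θ) x‖ ^ 2
          + w θ x * vdiv (fun y => A θ y • gradient (w θ) y) x) ?_]
      · exact integral_add hIa hIb
      · intro x hx
        have hxV : x ∈ V θ := hVs θ (hΩsub hx)
        have := vdiv_smul (hdW θ x hxV) (hdFld θ x hxV)
        rw [this, real_inner_smul_right, real_inner_self_eq_norm_sq]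
    have hRHS : (∫ x in frontier D.Ω, ⟪w θ x • (A θ x • gradient (w θ) x), nml D x⟫ ∂μH[1])
        = - I2 θ := by
      rw [setIntegral_congr_fun hFrm (g := fun x => -(A θ x * (w θ x) ^ 2)) ?_]
      · exact integral_neg _
      · intro x hx
        dsimp only
        rw [real_inner_smul_left, real_inner_smul_left, hbcw θ x hx]
        ring
    have hwvd : (∫ x in D.Ω, w θ x * vdiv (fun y => A θ y • gradient (w θ) y) x)
        = - I2 θ - I1 θ := by
      rw [hdivF, hRHS] at hLHS
      linarith
    calc (∫ x in D.Ω, 2 * w θ x * w' θ x)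
        = ∫ x in D.Ω, (2 * c) * (w θ x * vdiv (fun y => A θ y • gradient (w θ) y) x) := by
          refine setIntegral_congr_fun hΩm fun x hx => ?_
          rw [hpdew θ x hx]; ring
      _ = (2 * c) * ∫ x in D.Ω, w θ x * vdiv (fun y => A θ y • gradient (w θ) y) x :=
          integral_const_mul _ _
      _ = -(2 * c) * (I1 θ + I2 θ) := by rw [hwvd]; ring
  -- nonnegativity of the dissipation
  have hI1nn : ∀ θ, 0 ≤ I1 θ := fun θ =>
    setIntegral_nonneg hΩm fun x _ => mul_nonneg (hApos θ x) (sq_nonneg _)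
  have hI2nn : ∀ θ, 0 ≤ I2 θ := fun θ =>
    setIntegral_nonneg hFrm fun x _ => mul_nonneg (hApos θ x) (sq_nonneg _)
  have hEd' : ∀ θ, HasDerivAt Eng (-(2 * c) * (I1 θ + I2 θ)) θ := fun θ => hval θ ▸ hEd θ
  -- the energy is antitone and periodic, hence constant, hence the dissipation vanishes
  have hAnti : Antitone Eng := by
    refine antitone_of_deriv_nonpos (fun θ => (hEd' θ).differentiableAt) fun θ => ?_
    rw [(hEd' θ).deriv]
    have : 0 ≤ (2 * c) * (I1 θ + I2 θ) :=
      mul_nonneg (by linarith) (by linarith [hI1nn θ, hI2nn θ])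
    linarith
  have hEper : ∀ t, Eng (t + 1) = Eng t := by
    intro t
    simp only [hEng_def, hw_def, hper₁, hper₂]
  have hEconst : ∀ a b, Eng a = Eng b := const_of_antitone_periodic hAnti hEper
  have hDis0 : ∀ θ, I1 θ = 0 ∧ I2 θ = 0 := by
    intro θ
    have hEfun : Eng = fun _ => Eng 0 := funext fun t => hEconst t 0
    have h0 : deriv Eng θ = 0 := by rw [hEfun]; simp
    rw [(hEd' θ).deriv] at h0
    have hsum : I1 θ + I2 θ = 0 := by
      rcases mul_eq_zero.mp h0 with h | h
      · exfalso; have : (0:ℝ) < 2 * c := by positivity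
        rw [neg_eq_zero] at h; linarith
      · exact h
    exact ⟨le_antisymm (by linarith [hI2nn θ]) (hI1nn θ),
      le_antisymm (by linarith [hI1nn θ]) (hI2nn θ)⟩
  -- at θ = θα the coercivity window applies
  have hwin : θα ∈ Icc θα θω := ⟨le_refl θα, hαω.le⟩
  have hgrad0 : (∫ x in D.Ω, ‖gradient (w θα) x‖ ^ 2) = 0 := by
    have hInt1 : IntegrableOn (fun x => ‖gradient (w θα) x‖ ^ 2) D.Ω :=
      ((((hgwcK θα).norm).pow 2).integrableOn_compact hK).mono_set hΩsub
    have hInt2 : IntegrableOn (fun x => A θα x * ‖gradient (w θα) x‖ ^ 2) D.Ω :=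
      (((hAcK θα).mul (((hgwcK θα).norm).pow 2)).integrableOn_compact hK).mono_set hΩsub
    have hmono : Gthr * (∫ x in D.Ω, ‖gradient (w θα) x‖ ^ 2) ≤ I1 θα := by
      rw [← integral_const_mul]
      exact setIntegral_mono_on (hInt1.const_mul Gthr) hInt2 hΩm fun x _ =>
        mul_le_mul_of_nonneg_right (hAwin θα hwin x) (sq_nonneg _)
    have hnn : 0 ≤ ∫ x in D.Ω, ‖gradient (w θα) x‖ ^ 2 :=
      setIntegral_nonneg hΩm fun x _ => sq_nonneg _
    nlinarith [(hDis0 θα).1]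
  have hbd0 : (∫ x in frontier D.Ω, (w θα x) ^ 2 ∂μH[1]) = 0 := by
    by_cases hInt : Integrable (fun x => (w θα x) ^ 2) (μH[1].restrict (frontier D.Ω))
    · obtain ⟨Ma, hMa⟩ := hK.exists_bound_of_continuousOn (hAcK θα)
      have hmeas : AEStronglyMeasurable (fun x => A θα x * (w θα x) ^ 2)
          (μH[1].restrict (frontier D.Ω)) :=
        (((hAcK θα).mul ((hwcK θα).pow 2)).mono hFrsub).aestronglyMeasurable hFrm
      have hIntA : Integrable (fun x => A θα x * (w θα x) ^ 2)
          (μH[1].restrict (frontier D.Ω)) := by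
        refine Integrable.mono (hInt.const_mul Ma) hmeas ?_
        refine (ae_restrict_iff' hFrm).2 (Filter.Eventually.of_forall fun x hx => ?_)
        have h1 : |A θα x| ≤ Ma := hMa x (hFrsub hx)
        have h2 : (0:ℝ) ≤ |A θα x| := abs_nonneg _
        calc ‖A θα x * (w θα x) ^ 2‖ = |A θα x| * (w θα x) ^ 2 := by
              rw [norm_mul]; simp [abs_of_nonneg (sq_nonneg (w θα x))]
          _ ≤ Ma * (w θα x) ^ 2 := mul_le_mul_of_nonneg_right h1 (sq_nonneg _)
          _ ≤ ‖Ma * (w θα x) ^ 2‖ := le_abs_self _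
      have hmono : Gthr * (∫ x in frontier D.Ω, (w θα x) ^ 2 ∂μH[1]) ≤ I2 θα := by
        rw [← integral_const_mul]
        exact setIntegral_mono_on (hInt.const_mul Gthr) hIntA hFrm fun x _ =>
          mul_le_mul_of_nonneg_right (hAwin θα hwin x) (sq_nonneg _)
      have hnn : 0 ≤ ∫ x in frontier D.Ω, (w θα x) ^ 2 ∂μH[1] :=
        setIntegral_nonneg hFrm fun x _ => sq_nonneg _
      nlinarith [(hDis0 θα).2]
    · exact integral_undef hInt
  -- Friedrichs inequality forces the energy to vanish at θα, hence everywhere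
  have hFried := hCF.2 (w θα) ⟨V θα, hVo θα, hVs θα, (hwx θα).of_le one_le_two⟩
  rw [hgrad0, hbd0] at hFried
  have hEθα : Eng θα = 0 := by
    have hnn : 0 ≤ Eng θα := setIntegral_nonneg hΩm fun x _ => sq_nonneg _
    have : Eng θα ≤ 0 := by simpa using hFried
    linarith
  have hE0 : ∀ θ, Eng θ = 0 := fun θ => (hEconst θ θα).trans hEθα
  -- conclude w = 0 on Ω, then on the closure
  have hw0 : ∀ (θ : ℝ), ∀ x ∈ D.Ω, w θ x = 0 := by
    intro θ
    refine zero_on_open_of_integral_zero D.isOpen ((hwcK θ).mono hΩsub)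
      ((((hwcK θ).pow 2).integrableOn_compact hK).mono_set hΩsub) (hE0 θ)
  intro θ x hx
  have hcw : ContinuousWithinAt (w θ) D.Ω x :=
    ((hwx θ).continuousOn.continuousAt ((hVo θ).mem_nhds (hVs θ hx))).continuousWithinAt
  have hne : (nhdsWithin x D.Ω).NeBot := mem_closure_iff_nhdsWithin_neBot.1 hx
  have h2 : Filter.Tendsto (w θ) (nhdsWithin x D.Ω) (nhds 0) := by
    refine Filter.Tendsto.congr' ?_ tendsto_const_nhds
    filter_upwards [self_mem_nhdsWithin] with y hy
    exact (hw0 θ y hy).symm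
  have : w θ x = 0 := tendsto_nhds_unique hcw h2
  have := this
  simp only [hw_def] at this
  linarith

end
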